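/- Let J ≥ 1 and let x_1,…,x_J be real numbers with x_i ≥ 1 for all i and (x_1,…,x_J) ≠ (1,…,1). Then the sign of det A_J^+(x_1,…,x_J) equals (−1)^J, i.e. (−1)^J·det A_J^+(x_1,…,x_J) > 0. (Lemma 7.7(c)) -/

import Mathlib

/-- The `J × J` real symmetric matrix `A_J^ε(x₁, …, x_J)` (vertices `0`-indexed):
`A_J^ε = -2 ∑ᵢ xᵢ E_{i,i} + ∑_{i=1}^{J-1} (E_{i,i+1} + E_{i+1,i}) + ε (E_{1,J} + E_{J,1})`. -/
def matA (J : ℕ) (ε : ℝ) (x : ℕ → ℝ) : Matrix (Fin J) (Fin J) ℝ :=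
  Matrix.of fun i j =>
    (if (i : ℕ) = (j : ℕ) then -2 * x (i : ℕ) else 0)
    + (if (i : ℕ) + 1 = (j : ℕ) ∨ (j : ℕ) + 1 = (i : ℕ) then 1 else 0)
    + (if (i : ℕ) = 0 ∧ (j : ℕ) = J - 1 then ε else 0)
    + (if (j : ℕ) = 0 ∧ (i : ℕ) = J - 1 then ε else 0)

open Matrix in
/-- Lemma 7.7(c): if all `xᵢ ≥ 1` and not all `xᵢ = 1`, then
`sign (det A_J^+(x)) = (-1)^J`. -/
theorem detA_pos_sign (J : ℕ) (hJ : 1 ≤ J) (x : ℕ → ℝ)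
    (hx : ∀ i < J, 1 ≤ x i) (hne : ∃ i < J, x i ≠ 1) :
    0 < (-1 : ℝ) ^ J * (matA J 1 x).det := by
  obtain ⟨n, rfl⟩ : ∃ n, J = n + 1 := ⟨J - 1, by omega⟩
  set J := n + 1 with hJdef
  -- characterization of Fin successor/predecessor in terms of ℕ
  have hadd : ∀ i j : Fin J, j = i + 1 ↔
      ((i : ℕ) + 1 = (j : ℕ) ∨ ((i : ℕ) = J - 1 ∧ (j : ℕ) = 0)) := by
    intro i j
    rw [Fin.ext_iff, Fin.val_add_one]
    rcases eq_or_ne i (Fin.last n) with h | h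
    · simp [h, Fin.last, eq_comm]
      omega
    · have : (i : ℕ) ≠ n := fun hc => h (Fin.ext hc)
      simp [h]
      omega
  have hsub : ∀ i j : Fin J, j = i - 1 ↔
      ((j : ℕ) + 1 = (i : ℕ) ∨ ((j : ℕ) = J - 1 ∧ (i : ℕ) = 0)) := by
    intro i j
    rw [eq_sub_iff_add_eq, eq_comm, hadd j i]
  set M : Matrix (Fin J) (Fin J) ℝ := Matrix.of fun i j =>
    (if j = i then 2 * x (i : ℕ) else 0) + (if j = i + 1 then -1 else 0)
      + (if j = i - 1 then -1 else 0) with hMdef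
  have hM : M = -(matA J 1 x) := by
    ext i j
    have hi := i.isLt; have hj := j.isLt
    simp only [hMdef, matA, Matrix.of_apply, Matrix.neg_apply, hadd, hsub,
      Fin.ext_iff]
    split_ifs <;> first | omega | ring
  -- quadratic form identity
  have hquad : ∀ v : Fin J → ℝ, v ⬝ᵥ (M *ᵥ v)
      = ∑ i : Fin J, (v i - v (i + 1)) ^ 2 + ∑ i : Fin J, 2 * (x (i : ℕ) - 1) * v i ^ 2 := by
    intro v
    have e1 : ∑ i : Fin J, v (i + 1) * v (i + 1) = ∑ i : Fin J, v i * v i := by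
      exact Equiv.sum_comp (Equiv.addRight (1 : Fin J)) (fun i => v i * v i)
    have e2 : ∑ i : Fin J, v (i + 1) * v i = ∑ i : Fin J, v i * v (i - 1) := by
      have := Equiv.sum_comp (Equiv.addRight (1 : Fin J)) (fun i => v i * v (i - 1))
      simpa using this
    have lhs : v ⬝ᵥ (M *ᵥ v) = ∑ i : Fin J, v i * (2 * x (i : ℕ) * v i + -1 * v (i + 1) + -1 * v (i - 1)) := by
      simp [dotProduct, Matrix.mulVec, hMdef, add_mul, ite_mul, zero_mul,
        Finset.sum_add_distrib, Finset.sum_ite_eq' ]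
    rw [lhs]
    have key : ∀ i : Fin J,
        v i * (2 * x (i : ℕ) * v i + -1 * v (i + 1) + -1 * v (i - 1))
          - ((v i - v (i + 1)) ^ 2 + 2 * (x (i : ℕ) - 1) * v i ^ 2)
        = (v i * v i - v (i + 1) * v (i + 1)) + (v (i + 1) * v i - v i * v (i - 1)) := by
      intro i; ring
    have hsum := Finset.sum_congr rfl (fun i (_ : i ∈ Finset.univ) => key i)
    rw [← sub_eq_zero, ← Finset.sum_add_distrib, ← Finset.sum_sub_distrib, hsum,
      Finset.sum_add_distrib, Finset.sum_sub_distrib, Finset.sum_sub_distrib, e1, e2]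
    ring
  -- positive definiteness
  have hpd : M.PosDef := by
    refine Matrix.posDef_iff_dotProduct_mulVec.mpr ⟨?_, ?_⟩
    · ext i j
      simp only [Matrix.conjTranspose_apply, hMdef, Matrix.of_apply, star_trivial, hadd, hsub,
        Fin.ext_iff]
      split_ifs <;>
        first
          | omega
          | ring1
          | (rw [show ((i : ℕ)) = ((j : ℕ)) from by omega]; try ring1)
    · intro v hv
      have hstar : star v = v := by
        funext i; simp
      rw [hstar, hquad v]
      obtain ⟨k, hk, hxk⟩ := hne
      have hxk' : 1 < x k := lt_of_le_of_ne (hx k hk) (Ne.symm hxk)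
      set K : Fin J := ⟨k, hk⟩ with hK
      have hq1 : 0 ≤ ∑ i : Fin J, (v i - v (i + 1)) ^ 2 :=
        Finset.sum_nonneg fun i _ => sq_nonneg _
      have hterm : ∀ i : Fin J, 0 ≤ 2 * (x (i : ℕ) - 1) * v i ^ 2 := by
        intro i
        have := hx (i : ℕ) i.isLt
        have := sq_nonneg (v i)
        nlinarith
      have h2 : 0 ≤ ∑ i : Fin J, 2 * (x (i : ℕ) - 1) * v i ^ 2 :=
        Finset.sum_nonneg fun i _ => hterm i
      by_contra hcon
      push_neg at hcon
      have hA : ∑ i : Fin J, (v i - v (i + 1)) ^ 2 = 0 := le_antisymm (by linarith) hq1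
      have hB : ∑ i : Fin J, 2 * (x (i : ℕ) - 1) * v i ^ 2 = 0 := le_antisymm (by linarith) h2
      have hBall := (Finset.sum_eq_zero_iff_of_nonneg (fun i _ => hterm i)).mp hB
      have hvK : v K = 0 := by
        have := hBall K (Finset.mem_univ _)
        have hKval : ((K : Fin J) : ℕ) = k := rfl
        rw [hKval] at this
        have h2x : 0 < 2 * (x k - 1) := by linarith
        have := mul_eq_zero.mp this
        rcases this with h | h
        · exact absurd h (ne_of_gt h2x)
        · exact pow_eq_zero_iff (two_ne_zero) |>.mp h
      have hAall := (Finset.sum_eq_zero_iff_of_nonneg (fun i _ => sq_nonneg _)).mp hA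
      have step : ∀ i : Fin J, v (i + 1) = v i := by
        intro i
        have := hAall i (Finset.mem_univ _)
        have := pow_eq_zero_iff (two_ne_zero) |>.mp this
        linarith [this]
      open Fin.NatCast in
      have hcast : ∀ m : ℕ, v (m : Fin J) = v 0 := by
        intro m
        induction m with
        | zero => simp
        | succ p ih =>
          have : ((p + 1 : ℕ) : Fin J) = (p : Fin J) + 1 := by simp [Fin.ext_iff, Fin.val_add, Nat.add_mod]
          rw [this, step, ih]
      open Fin.NatCast in
      have hall : ∀ j : Fin J, v j = v 0 := by
        intro j
        rw [← Fin.cast_val_eq_self j, hcast]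
      apply hv
      funext j
      rw [hall j, ← hall K, hvK]
      rfl
  have hdet := hpd.det_pos
  rw [hM, Matrix.det_neg, Fintype.card_fin] at hdet
  exact hdet
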